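/- Let k be a field, n ≥ 1, a_0, …, a_{n−1} ∈ k with a_0 ≠ 0, and L(y) = ∂ⁿ(y) + Σ_{i=0}^{n−1} a_i·∂ⁱ(y). Let y_1, …, y_n ∈ Hk be k-linearly independent solutions of L(y) = 0, let V = Span_k{y_1,…,y_n} (the full solution space of L in Hk), and let B ∈ M(n,k) satisfy ∂(y_j) = Σ_i y_i·B_{ij}. Then the map sending σ ∈ G(V|k) to the matrix C_σ with σ(y_j) = Σ_i (C_σ)_{ij}·y_i is a group isomorphism from G(V|k) onto C_k(B), and moreover C_k(B) = GL(n,k) ∩ Span_k{I, B, B², …, B^{n−1}}. -/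

import Mathlib

open scoped BigOperators

set_option linter.unusedSectionVars false

/-- The ring of Hurwitz series over `R`: all sequences `ℕ → R`, with termwise addition and
the Hurwitz (binomial-convolution) product. -/
def HS (R : Type*) : Type _ := ℕ → R

namespace HS

variable {R : Type*} [CommRing R]

instance : AddCommGroup (HS R) := Pi.addCommGroup

instance {S : Type*} [Semiring S] [Module S R] : Module S (HS R) :=
  Pi.module ℕ (fun _ => R) S

@[simp] theorem add_apply (a b : HS R) (n : ℕ) : (a + b) n = a n + b n := rfl
@[simp] theorem zero_apply (n : ℕ) : (0 : HS R) n = 0 := rfl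
@[simp] theorem smul_apply {S : Type*} [Semiring S] [Module S R] (c : S) (a : HS R) (n : ℕ) :
    (c • a) n = c • a n := rfl

instance : Mul (HS R) :=
  ⟨fun a b n => ∑ j ∈ Finset.range (n + 1), (n.choose j : R) * a j * b (n - j)⟩

theorem mul_apply (a b : HS R) (n : ℕ) :
    (a * b) n = ∑ j ∈ Finset.range (n + 1), (n.choose j : R) * a j * b (n - j) := rfl

instance : One (HS R) := ⟨fun n => if n = 0 then 1 else 0⟩

theorem one_apply (n : ℕ) : (1 : HS R) n = if n = 0 then 1 else 0 := rfl

private theorem hmul_comm (a b : HS R) : a * b = b * a := by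
  funext n
  rw [mul_apply, mul_apply, ← Finset.sum_range_reflect]
  refine Finset.sum_congr rfl fun j hj => ?_
  have hj' : j ≤ n := Nat.lt_succ_iff.mp (Finset.mem_range.mp hj)
  have h1 : n + 1 - 1 - j = n - j := by omega
  rw [h1, Nat.choose_symm hj', Nat.sub_sub_self hj']
  ring

private theorem hone_mul (a : HS R) : 1 * a = a := by
  funext n
  rw [mul_apply]
  rw [Finset.sum_eq_single 0]
  · simp [one_apply]
  · intro j hj hj0
    simp [one_apply, hj0]
  · intro h
    exact absurd (Finset.mem_range.mpr (Nat.succ_pos n)) h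

private theorem hmul_assoc (a b c : HS R) : a * b * c = a * (b * c) := by
  funext n
  rw [mul_apply, mul_apply]
  simp_rw [mul_apply, Finset.mul_sum]
  simp_rw [Finset.sum_mul]
  rw [Finset.sum_sigma', Finset.sum_sigma']
  refine Finset.sum_nbij' (fun x => ⟨x.2, x.1 - x.2⟩) (fun x => ⟨x.1 + x.2, x.1⟩)
    ?_ ?_ ?_ ?_ ?_
  · rintro ⟨p, i⟩ h
    simp only [Finset.mem_sigma, Finset.mem_range] at h ⊢
    omega
  · rintro ⟨i, j⟩ h
    simp only [Finset.mem_sigma, Finset.mem_range] at h ⊢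
    omega
  · rintro ⟨p, i⟩ h
    simp only [Finset.mem_sigma, Finset.mem_range] at h
    dsimp only
    exact congrArg (fun m => (⟨m, i⟩ : Σ _ : ℕ, ℕ)) (by omega)
  · rintro ⟨i, j⟩ h
    simp only [Finset.mem_sigma, Finset.mem_range] at h
    dsimp only
    exact congrArg (fun m => (⟨i, m⟩ : Σ _ : ℕ, ℕ)) (by omega)
  · rintro ⟨p, i⟩ h
    simp only [Finset.mem_sigma, Finset.mem_range] at h
    have hip : i ≤ p := by omega
    have hpn : p ≤ n := by omega
    have h2 : n - i - (p - i) = n - p := by omega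
    have h3 : (n.choose p : R) * (p.choose i : R)
        = (n.choose i : R) * ((n - i).choose (p - i) : R) := by
      rw [← Nat.cast_mul, ← Nat.cast_mul, Nat.choose_mul hip]
    simp only [h2]
    calc ((n.choose p : R) * ((p.choose i : R) * a i * b (p - i)) * c (n - p))
        = ((n.choose p : R) * (p.choose i : R)) * (a i * b (p - i) * c (n - p)) := by ring
      _ = ((n.choose i : R) * ((n - i).choose (p - i) : R)) * (a i * b (p - i) * c (n - p)) := by
          rw [h3]
      _ = (n.choose i : R) * a i * (((n - i).choose (p - i) : R) * b (p - i) * c (n - p)) := by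
          ring

instance : CommRing (HS R) :=
  { (inferInstance : AddCommGroup (HS R)) with
    mul := (· * ·)
    one := (1 : HS R)
    mul_assoc := hmul_assoc
    one_mul := hone_mul
    mul_one := fun a => by rw [hmul_comm]; exact hone_mul a
    left_distrib := fun a b c => by
      funext n
      simp only [mul_apply, add_apply]
      rw [← Finset.sum_add_distrib]
      exact Finset.sum_congr rfl fun j _ => by ring
    right_distrib := fun a b c => by
      funext n
      simp only [mul_apply, add_apply]
      rw [← Finset.sum_add_distrib]
      exact Finset.sum_congr rfl fun j _ => by ring
    zero_mul := fun a => by funext n; simp [mul_apply]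
    mul_zero := fun a => by funext n; simp [mul_apply]
    mul_comm := hmul_comm }

/-- The derivation `∂` on Hurwitz series: the left-shift. -/
def D (a : HS R) : HS R := fun n => a (n + 1)

@[simp] theorem D_apply (a : HS R) (n : ℕ) : D a n = a (n + 1) := rfl

/-- The exponential `exp β = (1, β, β², …)`. -/
def hexp (b : R) : HS R := fun n => b ^ n

@[simp] theorem hexp_apply (b : R) (n : ℕ) : hexp b n = b ^ n := rfl

/-- The divided power `x^{[i]}`: the sequence with `1` in position `i` and `0` elsewhere. -/
def dpow (i : ℕ) : HS R := fun n => if n = i then 1 else 0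

/-- The constant Hurwitz series `(r, 0, 0, …)`. -/
def const (r : R) : HS R := fun n => if n = 0 then r else 0

/-- Entrywise map of a Hurwitz series along a map of coefficients. -/
def map {K L : Type*} (f : K → L) (a : HS K) : HS L := fun n => f (a n)

/-- `σ` is a differential automorphism of the subspace `V` of `HS k`:
a `k`-linear automorphism of `V` commuting with the derivation `D`. -/
def IsDiffAut {k : Type*} [Field k] (V : Submodule k (HS k)) (σ : V ≃ₗ[k] V) : Prop :=
  ∀ v w : V, (w : HS k) = D (v : HS k) → (σ w : HS k) = D (σ v : HS k)

end HS


section Helpers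

open HS

variable {k : Type*} [Field k]

/-- `D` as a linear map. -/
def Dlin (k : Type*) [Field k] : HS k →ₗ[k] HS k where
  toFun := HS.D
  map_add' := fun _ _ => rfl
  map_smul' := fun _ _ => rfl

@[simp] theorem Dlin_apply (a : HS k) : Dlin k a = HS.D a := rfl

theorem hs_sum_apply {ι : Type*} (s : Finset ι) (f : ι → HS k) (m : ℕ) :
    (∑ i ∈ s, f i) m = ∑ i ∈ s, f i m := by
  classical
  induction s using Finset.induction_on with
  | empty => rfl
  | insert _ _ h ih => rw [Finset.sum_insert h, Finset.sum_insert h, HS.add_apply, ih]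

theorem const_mul (c : k) (x : HS k) : HS.const c * x = c • x := by
  funext m
  rw [HS.mul_apply]
  rw [Finset.sum_eq_single 0]
  · simp [HS.const]
  · intro j hj hj0
    simp [HS.const, hj0]
  · intro h
    exact absurd (Finset.mem_range.mpr (Nat.succ_pos m)) h

theorem iterD (i : ℕ) (v : HS k) (j : ℕ) : (HS.D^[i] v) j = v (j + i) := by
  induction i generalizing v j with
  | zero => rfl
  | succ i ih =>
      rw [Function.iterate_succ_apply, ih, HS.D_apply]
      exact congrArg v (by omega)

end Helpers

/-- The nilpotent upper Jordan block of size `m` (ones on the superdiagonal). -/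
def jordanBlock (k : Type*) [Field k] (m : ℕ) : Matrix (Fin m) (Fin m) k :=
  Matrix.of fun i j => if (i : ℕ) + 1 = (j : ℕ) then 1 else 0

/-- The centralizer of a matrix `A` inside `GL(m, k)`, as a set of matrices. -/
def matCent {k : Type*} [Field k] {m : ℕ} (A : Matrix (Fin m) (Fin m) k) :
    Set (Matrix (Fin m) (Fin m) k) :=
  {T | IsUnit T ∧ A * T = T * A}

/-- The group `U(m, k)` of upper triangular matrices in `GL(m, k)` with all diagonal
entries equal to `1`, as a set of matrices. -/
def uniUpper (k : Type*) [Field k] (m : ℕ) : Set (Matrix (Fin m) (Fin m) k) :=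
  {T | IsUnit T ∧ (∀ i, T i i = 1) ∧ ∀ i j : Fin m, (j : ℕ) < (i : ℕ) → T i j = 0}

set_option synthInstance.maxHeartbeats 1000000 in
set_option maxHeartbeats 1000000 in
/-- if `a₀ ≠ 0`, the map `σ ↦ C_σ` is a group isomorphism from `G(V|k)` onto
`C_k(B)`, and `C_k(B) = GL(n,k) ∩ Span_k{I, B, …, B^{n-1}}`. -/
theorem stmt_15 {k : Type*} [Field k] (n : ℕ) (hn : 0 < n) (a : Fin n → k)
    (ha : a ⟨0, hn⟩ ≠ 0)
    (y : Fin n → HS k)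
    (hsol : ∀ j, HS.D^[n] (y j) + ∑ i : Fin n, HS.const (a i) * HS.D^[(i : ℕ)] (y j) = 0)
    (hind : LinearIndependent k y)
    (V : Submodule k (HS k)) (hV : V = Submodule.span k (Set.range y))
    (hfull : (V : Set (HS k)) =
      {h : HS k | HS.D^[n] h + ∑ i : Fin n, HS.const (a i) * HS.D^[(i : ℕ)] h = 0})
    (hmem : ∀ j, y j ∈ V)
    (B : Matrix (Fin n) (Fin n) k)
    (hB : ∀ j, HS.D (y j) = ∑ i, B i j • y i) :
    (∃ C : {σ : V ≃ₗ[k] V // HS.IsDiffAut V σ} → Matrix (Fin n) (Fin n) k,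
      (∀ σ j, ((σ.1 ⟨y j, hmem j⟩ : V) : HS k) = ∑ i, C σ i j • y i) ∧
      Function.Injective C ∧
      (∀ σ τ ρ, (∀ v : V, ρ.1 v = σ.1 (τ.1 v)) → C ρ = C σ * C τ) ∧
      Set.range C = matCent B) ∧
    matCent B = {T : Matrix (Fin n) (Fin n) k | IsUnit T ∧
      T ∈ Submodule.span k (Set.range fun i : Fin n => B ^ (i : ℕ))} := by
  classical
  -- basic setup
  have hDV : ∀ v ∈ V, HS.D v ∈ V := by
    intro v hv
    rw [hV] at hv ⊢
    induction hv using Submodule.span_induction with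
    | mem x hx =>
        obtain ⟨j, rfl⟩ := hx
        rw [hB]
        exact Submodule.sum_mem _ fun i _ =>
          Submodule.smul_mem _ _ (Submodule.subset_span ⟨i, rfl⟩)
    | zero => exact Submodule.zero_mem _
    | add x z hx hz ihx ihz => exact Submodule.add_mem _ ihx ihz
    | smul c x hx ih => exact Submodule.smul_mem _ _ ih
  let d : V →ₗ[k] V := (Dlin k).restrict (p := V) (q := V) (fun x hx => hDV x hx)
  have d_coe : ∀ v : V, ((d v : V) : HS k) = HS.D (v : HS k) := fun v => rfl
  -- the basis from y
  let y' : Fin n → V := fun j => ⟨y j, hmem j⟩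
  have hcoe : V.subtype ∘ y' = y := rfl
  have hli : LinearIndependent k y' :=
    LinearIndependent.of_comp V.subtype (by rwa [hcoe])
  have hsp : ⊤ ≤ Submodule.span k (Set.range y') := by
    intro v _
    have hv : (v : HS k) ∈ Submodule.span k (Set.range y) := by rw [← hV]; exact v.2
    obtain ⟨c, hc⟩ := (Submodule.mem_span_range_iff_exists_fun k).mp hv
    have : v = ∑ i, c i • y' i := by
      apply Subtype.ext
      rw [← hc]
      simp [y', Submodule.coe_sum]
    rw [this]
    exact Submodule.sum_mem _ fun i _ =>
      Submodule.smul_mem _ _ (Submodule.subset_span ⟨i, rfl⟩)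
  let b : Module.Basis (Fin n) k V := Module.Basis.mk hli hsp
  have hb : ∀ j, b j = y' j := fun j => Module.Basis.mk_apply hli hsp j
  have hbc : ∀ j, ((b j : V) : HS k) = y j := fun j => by rw [hb]
  -- the matrix of d is B
  have hd_eq : d = Matrix.toLin b b B := by
    apply b.ext
    intro j
    apply Subtype.ext
    rw [Matrix.toLin_self, d_coe, hbc, hB]
    rw [Submodule.coe_sum]
    exact Finset.sum_congr rfl fun i _ => by rw [SetLike.val_smul, hbc]
  have hdB : LinearMap.toMatrix b b d = B := by
    rw [hd_eq, LinearMap.toMatrix_toLin]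
  -- powers
  have hpow : ∀ m : ℕ, LinearMap.toMatrix b b (d ^ m) = B ^ m := by
    intro m
    induction m with
    | zero =>
        rw [pow_zero, pow_zero]
        exact LinearMap.toMatrix_one b
    | succ m ih => rw [pow_succ, pow_succ, LinearMap.toMatrix_mul, ih, hdB]
  -- the matrix map C
  set C : {σ : V ≃ₗ[k] V // HS.IsDiffAut V σ} → Matrix (Fin n) (Fin n) k :=
    fun σ => LinearMap.toMatrix b b σ.1.toLinearMap with hC
  -- IsDiffAut ↔ commutes with d
  have hDA : ∀ σ : V ≃ₗ[k] V,
      HS.IsDiffAut V σ ↔ σ.toLinearMap ∘ₗ d = d ∘ₗ σ.toLinearMap := by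
    intro σ
    constructor
    · intro h
      apply LinearMap.ext
      intro v
      apply Subtype.ext
      exact (h v (d v) (d_coe v)).trans (d_coe (σ v)).symm
    · intro h v w hw
      have hwd : w = d v := Subtype.ext (hw.trans (d_coe v).symm)
      have := congrArg (fun x => ((x : V) : HS k)) (LinearMap.congr_fun h v)
      rw [hwd]
      simp only [LinearMap.comp_apply, LinearEquiv.coe_coe] at this
      rw [this, d_coe]
  refine ⟨⟨C, ?_, ?_, ?_, ?_⟩, ?_⟩
  · -- representation property
    intro σ j
    have h1 : σ.1.toLinearMap = Matrix.toLin b b (C σ) := by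
      rw [hC, Matrix.toLin_toMatrix]
    have h2 : σ.1 (b j) = ∑ i, C σ i j • b i := by
      have := Matrix.toLin_self b b (C σ) j
      calc σ.1 (b j) = σ.1.toLinearMap (b j) := rfl
        _ = ∑ i, C σ i j • b i := by rw [h1, this]
    have h3 : (⟨y j, hmem j⟩ : V) = b j := by rw [hb]
    rw [h3, h2, Submodule.coe_sum]
    exact Finset.sum_congr rfl fun i _ => by rw [SetLike.val_smul, hbc]
  · -- injectivity
    intro σ τ h
    have h1 : σ.1.toLinearMap = τ.1.toLinearMap :=
      (LinearMap.toMatrix b b).injective h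
    exact Subtype.ext (LinearEquiv.toLinearMap_injective h1)
  · -- multiplicativity
    intro σ τ ρ h
    have h1 : ρ.1.toLinearMap = σ.1.toLinearMap ∘ₗ τ.1.toLinearMap :=
      LinearMap.ext fun v => h v
    rw [hC]
    show LinearMap.toMatrix b b ρ.1.toLinearMap = _
    rw [h1, LinearMap.toMatrix_comp b b b]
  · -- range C = matCent B
    apply Set.eq_of_subset_of_subset
    · rintro _ ⟨σ, rfl⟩
      constructor
      · have h1 : C σ * LinearMap.toMatrix b b σ.1.symm.toLinearMap = 1 := by
          rw [hC, ← LinearMap.toMatrix_comp b b b]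
          have : σ.1.toLinearMap ∘ₗ σ.1.symm.toLinearMap = LinearMap.id :=
            LinearMap.ext fun v => σ.1.apply_symm_apply v
          rw [this, LinearMap.toMatrix_id]
        exact ⟨⟨C σ, _, h1, mul_eq_one_comm.mp h1⟩, rfl⟩
      · -- B * C σ = C σ * B
        have h2 := (hDA σ.1).mp σ.2
        have h3 := congrArg (LinearMap.toMatrix b b) h2
        rw [LinearMap.toMatrix_comp b b b, LinearMap.toMatrix_comp b b b, hdB] at h3
        exact h3.symm
    · rintro T ⟨hU, hcm⟩
      let U : Matrix (Fin n) (Fin n) k := ↑hU.unit⁻¹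
      have hTU : T * U = 1 := by
        have := hU.unit.mul_inv
        rwa [hU.unit_spec] at this
      have hUT : U * T = 1 := by
        have := hU.unit.inv_mul
        rwa [hU.unit_spec] at this
      have h1 : Matrix.toLin b b T ∘ₗ Matrix.toLin b b U = LinearMap.id := by
        rw [← Matrix.toLin_mul, hTU, Matrix.toLin_one]
      have h2 : Matrix.toLin b b U ∘ₗ Matrix.toLin b b T = LinearMap.id := by
        rw [← Matrix.toLin_mul, hUT, Matrix.toLin_one]
      let e : V ≃ₗ[k] V := LinearEquiv.ofLinear (Matrix.toLin b b T) (Matrix.toLin b b U) h1 h2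
      have he : e.toLinearMap = Matrix.toLin b b T := rfl
      have hda : HS.IsDiffAut V e := by
        rw [hDA, he, hd_eq, ← Matrix.toLin_mul, ← Matrix.toLin_mul, hcm]
      refine ⟨⟨e, hda⟩, ?_⟩
      rw [hC]
      show LinearMap.toMatrix b b e.toLinearMap = T
      rw [he, LinearMap.toMatrix_toLin]
  · -- matCent B = units ∩ span of powers
    apply Set.eq_of_subset_of_subset
    · rintro T ⟨hU, hcm⟩
      refine ⟨hU, ?_⟩
      -- the ODE satisfied by elements of V
      have hODE : ∀ v : HS k, v ∈ V → ∀ j : ℕ,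
          v (j + n) + ∑ i : Fin n, a i * v (j + (i : ℕ)) = 0 := by
        intro v hv j
        have hv' : v ∈ {h : HS k | HS.D^[n] h +
            ∑ i : Fin n, HS.const (a i) * HS.D^[(i : ℕ)] h = 0} := by
          rw [← hfull]; exact hv
        have h0 := congrFun hv' j
        rw [HS.add_apply, HS.zero_apply, iterD] at h0
        rw [← h0]
        congr 1
        rw [hs_sum_apply]
        exact Finset.sum_congr rfl fun i _ => by
          rw [const_mul, HS.smul_apply, iterD, smul_eq_mul]
      -- injectivity of initial values
      have hinj0 : ∀ v : V, (∀ j < n, (v : HS k) j = 0) → v = 0 := by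
        intro v hv0
        have : ∀ m, (v : HS k) m = 0 := by
          intro m
          induction m using Nat.strong_induction_on with
          | _ m ih =>
            by_cases hmn : m < n
            · exact hv0 m hmn
            · have hm : m = (m - n) + n := by omega
              have h0 := hODE (v : HS k) v.2 (m - n)
              rw [hm]
              have hz : ∀ i : Fin n, (v : HS k) ((m - n) + (i : ℕ)) = 0 := fun i =>
                ih _ (by omega)
              rw [Finset.sum_congr rfl (fun i _ => by rw [hz i, mul_zero])] at h0
              simpa using h0
        exact Subtype.ext (funext this)
      -- evaluation map
      let ev : V →ₗ[k] (Fin n → k) :=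
        { toFun := fun v i => (v : HS k) (i : ℕ)
          map_add' := fun v w => rfl
          map_smul' := fun c v => rfl }
      have hevinj : Function.Injective ev := by
        intro v w h
        have h1 : v - w = 0 := by
          apply hinj0
          intro j hj
          have hvw : (v : HS k) j = (w : HS k) j := congrFun h ⟨j, hj⟩
          rw [Submodule.coe_sub]
          show (v : HS k) j - (w : HS k) j = 0
          rw [hvw, sub_self]
        exact sub_eq_zero.mp h1
      haveI : FiniteDimensional k V := Module.Finite.of_basis b
      have hfr : Module.finrank k V = n := by
        rw [Module.finrank_eq_card_basis b, Fintype.card_fin]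
      have hsurj : Function.Surjective ev := by
        have h1 : LinearMap.range ev = ⊤ := by
          apply Submodule.eq_top_of_finrank_eq
          rw [LinearMap.finrank_range_of_inj hevinj, hfr, Module.finrank_fin_fun]
        exact LinearMap.range_eq_top.mp h1
      obtain ⟨u, hu⟩ := hsurj (fun i => if (i : ℕ) = n - 1 then 1 else 0)
      have huval : ∀ j (hj : j < n), (u : HS k) j = if j = n - 1 then 1 else 0 := by
        intro j hj
        exact congrFun hu ⟨j, hj⟩
      -- coe of powers of d
      have dpow_coe : ∀ (m : ℕ) (v : V), (((d ^ m) v : V) : HS k) = HS.D^[m] (v : HS k) := by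
        intro m
        induction m with
        | zero => intro v; rfl
        | succ m ih =>
            intro v
            rw [pow_succ', Module.End.mul_apply, d_coe, ih, Function.iterate_succ_apply']
      let fam : Fin n → V := fun i => (d ^ (i : ℕ)) u
      have famval : ∀ (i : Fin n) (j : ℕ), ((fam i : V) : HS k) j = (u : HS k) (j + (i : ℕ)) :=
        fun i j => by rw [dpow_coe, iterD]
      -- linear independence of fam
      have hfamli : LinearIndependent k fam := by
        rw [Fintype.linearIndependent_iff]
        intro c hc0
        have key : ∀ j, j < n → c ⟨n - 1 - j, by omega⟩ = 0 := by
          intro j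
          induction j using Nat.strong_induction_on with
          | _ j ih =>
            intro hj
            have h1 : ∑ i : Fin n, c i * (u : HS k) (j + (i : ℕ)) = 0 := by
              have h0 : ((∑ i : Fin n, c i • fam i : V) : HS k) j = 0 := by rw [hc0]; rfl
              rw [Submodule.coe_sum, hs_sum_apply] at h0
              calc ∑ i : Fin n, c i * (u : HS k) (j + (i : ℕ))
                  = ∑ i : Fin n, ((c i • fam i : V) : HS k) j :=
                    Finset.sum_congr rfl fun i _ => by
                      rw [SetLike.val_smul, HS.smul_apply, famval, smul_eq_mul]
                _ = 0 := h0
            rw [Finset.sum_eq_single (⟨n - 1 - j, by omega⟩ : Fin n)] at h1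
            · rw [huval (j + (n - 1 - j)) (by omega)] at h1
              simp only [if_pos (by omega : j + (n - 1 - j) = n - 1)] at h1
              rw [mul_one] at h1
              exact h1
            · intro i _ hne
              by_cases hlt : j + (i : ℕ) < n - 1
              · rw [huval _ (by omega), if_neg (by omega), mul_zero]
              · have hgt : (i : ℕ) > n - 1 - j := by
                  rcases lt_or_ge (n - 1 - j) (i : ℕ) with h | h
                  · exact h
                  · exfalso
                    apply hne
                    apply Fin.ext
                    show (i : ℕ) = n - 1 - j
                    omega
                have hci : c i = 0 := by
                  have h2 := ih (n - 1 - (i : ℕ)) (by omega) (by omega)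
                  have h3 : (⟨n - 1 - (n - 1 - (i : ℕ)), by omega⟩ : Fin n) = i := by
                    apply Fin.ext
                    show n - 1 - (n - 1 - (i : ℕ)) = (i : ℕ)
                    have := i.2
                    omega
                  rwa [h3] at h2
                rw [hci, zero_mul]
            · intro h
              exact absurd (Finset.mem_univ _) h
        intro i
        have h2 := key (n - 1 - (i : ℕ)) (by omega)
        have h3 : (⟨n - 1 - (n - 1 - (i : ℕ)), by omega⟩ : Fin n) = i := by
          apply Fin.ext
          show n - 1 - (n - 1 - (i : ℕ)) = (i : ℕ)
          have := i.2
          omega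
        rwa [h3] at h2
      haveI : Nonempty (Fin n) := ⟨⟨0, hn⟩⟩
      let b2 : Module.Basis (Fin n) k V :=
        basisOfLinearIndependentOfCardEqFinrank hfamli (by rw [Fintype.card_fin, hfr])
      have hb2 : ∀ i, b2 i = fam i := fun i => by
        rw [coe_basisOfLinearIndependentOfCardEqFinrank]
      -- g commutes with d
      let g : V →ₗ[k] V := Matrix.toLin b b T
      have hgd : g * d = d * g := by
        show g ∘ₗ d = d ∘ₗ g
        rw [hd_eq]
        show Matrix.toLin b b T ∘ₗ Matrix.toLin b b B = _
        rw [← Matrix.toLin_mul, ← Matrix.toLin_mul, hcm]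
      have hcomm : ∀ m : ℕ, g * d ^ m = d ^ m * g := fun m =>
        (Commute.pow_right hgd m)
      set c : Fin n → k := fun i => b2.repr (g u) i with hcdef
      have hgu : g u = ∑ i, c i • fam i := by
        have := b2.sum_repr (g u)
        rw [← this]
        exact (Finset.sum_congr rfl fun i _ => by rw [hb2]).symm
      have hg : g = ∑ i : Fin n, c i • d ^ (i : ℕ) := by
        apply b2.ext
        intro j
        rw [hb2]
        have l1 : g (fam j) = (d ^ (j : ℕ)) (g u) := by
          show g ((d ^ (j : ℕ)) u) = _
          rw [← Module.End.mul_apply, hcomm, Module.End.mul_apply]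
        rw [l1, hgu, map_sum]
        rw [LinearMap.sum_apply]
        refine Finset.sum_congr rfl fun i _ => ?_
        rw [map_smul, LinearMap.smul_apply]
        congr 1
        show (d ^ (j : ℕ)) ((d ^ (i : ℕ)) u) = (d ^ (i : ℕ)) ((d ^ (j : ℕ)) u)
        rw [← Module.End.mul_apply, ← Module.End.mul_apply, ← pow_add, ← pow_add,
          Nat.add_comm (j : ℕ) (i : ℕ)]
      have hTMsum : ∀ (s : Finset (Fin n)) (f : Fin n → (V →ₗ[k] V)),
          LinearMap.toMatrix b b (∑ i ∈ s, f i) = ∑ i ∈ s, LinearMap.toMatrix b b (f i) := by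
        intro s f
        induction s using Finset.induction_on with
        | empty =>
            rw [Finset.sum_empty, Finset.sum_empty]
            exact (LinearMap.toMatrix b b).map_zero
        | insert _ _ h ih =>
            rw [Finset.sum_insert h, Finset.sum_insert h,
              (LinearMap.toMatrix b b).map_add, ih]
      have hT : T = ∑ i : Fin n, c i • B ^ (i : ℕ) := by
        have h1 : LinearMap.toMatrix b b g = T := LinearMap.toMatrix_toLin b b T
        rw [← h1, hg, hTMsum]
        exact Finset.sum_congr rfl fun i _ => by
          rw [LinearEquiv.map_smul, hpow]
      exact (Submodule.mem_span_range_iff_exists_fun k).mpr ⟨c, hT.symm⟩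
    · rintro T ⟨hU, hsp2⟩
      refine ⟨hU, ?_⟩
      obtain ⟨c, hc⟩ := (Submodule.mem_span_range_iff_exists_fun k).mp hsp2
      rw [← hc, Finset.mul_sum, Finset.sum_mul]
      exact Finset.sum_congr rfl fun i _ => by
        rw [Matrix.mul_smul, Matrix.smul_mul, ← pow_succ, ← pow_succ']
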